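/- Let S be a solution of S' = μN(1-p) - β(t)S f(I) - (μ+r(t))S + δ(N-S-E-I) along a nonnegative solution (S,E,I) of the reduced SEIRS system, and let Ŝ be the positive LT-periodic solution of S' = μN(1-p) - (μ+r(t))S + δ(N-S). Then S(t) - Ŝ(t) ≤ (S(0)-Ŝ(0)) e^{-∫₀ᵗ(μ+r(s)+δ)ds} for all t ≥ 0; in particular limsup_{t→∞}(S(t)-Ŝ(t)) ≤ 0. -/

import Mathlib

theorem stmt_10 (μ σ γ δ N p : ℝ) (β r : ℝ → ℝ) (f : ℝ → ℝ)
    (hμ : μ > 0) (hσ : σ > 0) (hγ : γ > 0) (hδ : δ > 0) (hN : N > 0)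
    (hp : 0 ≤ p ∧ p ≤ 1)
    (hβ : Continuous β) (hβpos : ∀ t, β t > 0)
    (hr : Continuous r) (hrpos : ∀ t, r t > 0)
    (hf : ∀ x : ℝ, 0 ≤ x → 0 ≤ f x)
    (S E I : ℝ → ℝ)
    (hSnn : ∀ t, 0 ≤ S t) (hEnn : ∀ t, 0 ≤ E t) (hInn : ∀ t, 0 ≤ I t)
    (hS : ∀ t ∈ Set.Ici (0:ℝ), HasDerivAt S
      (μ * N * (1 - p) - β t * S t * f (I t) - (μ + r t) * S t
        + δ * (N - S t - E t - I t)) t)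
    (hE : ∀ t ∈ Set.Ici (0:ℝ), HasDerivAt E
      (β t * S t * f (I t) - (μ + σ) * E t) t)
    (hI : ∀ t ∈ Set.Ici (0:ℝ), HasDerivAt I
      (σ * E t - (μ + γ) * I t) t)
    (Shat : ℝ → ℝ)
    (hShat : ∀ t : ℝ, HasDerivAt Shat
      (μ * N * (1 - p) - (μ + r t) * Shat t + δ * (N - Shat t)) t)
    (hShatpos : ∀ t, Shat t > 0) :
    (∀ t : ℝ, 0 ≤ t →
      S t - Shat t ≤ (S 0 - Shat 0) * Real.exp (-(∫ s in (0:ℝ)..t, (μ + r s + δ)))) ∧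
    Filter.limsup (fun t => S t - Shat t) Filter.atTop ≤ 0 := by
  -- the integrand
  set g : ℝ → ℝ := fun s => μ + r s + δ with hg
  have hgcont : Continuous g := by continuity
  set R : ℝ → ℝ := fun t => ∫ s in (0:ℝ)..t, g s with hR
  have hRderiv : ∀ t : ℝ, HasDerivAt R (g t) t := fun t =>
    intervalIntegral.integral_hasDerivAt_right
      (hgcont.intervalIntegrable _ _)
      hgcont.aestronglyMeasurable.stronglyMeasurableAtFilter
      hgcont.continuousAt
  -- v = (S - Shat) * exp ∘ R
  set v : ℝ → ℝ := fun t => (S t - Shat t) * Real.exp (R t) with hv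
  have hvderiv : ∀ t ∈ Set.Ici (0:ℝ), HasDerivAt v
      ((-(β t * S t * f (I t)) - δ * (E t + I t)) * Real.exp (R t)) t := by
    intro t ht
    have h1 := ((hS t ht).sub (hShat t)).mul ((hRderiv t).exp)
    refine h1.congr_deriv ?_
    simp only [hg, Pi.sub_apply]
    ring
  have hvanti : AntitoneOn v (Set.Ici (0:ℝ)) := by
    have hint : interior (Set.Ici (0:ℝ)) = Set.Ioi 0 := interior_Ici
    apply antitoneOn_of_deriv_nonpos (convex_Ici 0)
    · exact fun t ht => ((hvderiv t ht).continuousAt).continuousWithinAt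
    · rw [hint]
      exact fun t ht => ((hvderiv t (Set.mem_Ici.2 (le_of_lt ht))).differentiableAt).differentiableWithinAt
    · rw [hint]
      intro t ht
      rw [(hvderiv t (Set.mem_Ici.2 (le_of_lt ht))).deriv]
      have h1 : 0 ≤ β t * S t * f (I t) :=
        mul_nonneg (mul_nonneg (hβpos t).le (hSnn t)) (hf _ (hInn t))
      have h2 : 0 ≤ δ * (E t + I t) := mul_nonneg hδ.le (add_nonneg (hEnn t) (hInn t))
      have h3 : (0:ℝ) < Real.exp (R t) := Real.exp_pos _
      nlinarith
  have hR0 : R 0 = 0 := intervalIntegral.integral_same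
  have hmain : ∀ t : ℝ, 0 ≤ t →
      S t - Shat t ≤ (S 0 - Shat 0) * Real.exp (-(R t)) := by
    intro t ht
    have := hvanti (Set.self_mem_Ici) ht ht
    simp only [hv, hR0, Real.exp_zero, mul_one] at this
    have hepos : (0:ℝ) < Real.exp (R t) := Real.exp_pos _
    rw [Real.exp_neg, ← div_eq_mul_inv, le_div_iff₀ hepos]
    exact this
  refine ⟨hmain, ?_⟩
  -- the decaying bound
  set c : ℝ := S 0 - Shat 0 with hc
  set b : ℝ → ℝ := fun t => |c| * Real.exp (-((μ + δ) * t)) with hb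
  have hRlow : ∀ t : ℝ, 0 ≤ t → (μ + δ) * t ≤ R t := by
    intro t ht
    have h1 : ∫ s in (0:ℝ)..t, (μ + δ) ≤ ∫ s in (0:ℝ)..t, g s := by
      apply intervalIntegral.integral_mono_on ht
        (intervalIntegrable_const) (hgcont.intervalIntegrable _ _)
      intro s _
      have := hrpos s
      simp only [hg]
      linarith
    rw [intervalIntegral.integral_const, smul_eq_mul] at h1
    show (μ + δ) * t ≤ ∫ s in (0:ℝ)..t, g s
    nlinarith
  have hub : ∀ t : ℝ, 0 ≤ t → S t - Shat t ≤ b t := by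
    intro t ht
    calc S t - Shat t ≤ c * Real.exp (-(R t)) := hmain t ht
      _ ≤ |c| * Real.exp (-(R t)) :=
          mul_le_mul_of_nonneg_right (le_abs_self c) (Real.exp_pos _).le
      _ ≤ |c| * Real.exp (-((μ + δ) * t)) := by
          apply mul_le_mul_of_nonneg_left _ (abs_nonneg c)
          exact Real.exp_le_exp.2 (neg_le_neg (hRlow t ht))
  have hbtend : Filter.Tendsto b Filter.atTop (nhds 0) := by
    have h1 : Filter.Tendsto (fun t : ℝ => -((μ + δ) * t)) Filter.atTop Filter.atBot := by
      apply Filter.tendsto_neg_atBot_iff.2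
      exact Filter.Tendsto.const_mul_atTop (by linarith) Filter.tendsto_id
    have h2 : Filter.Tendsto (fun t : ℝ => Real.exp (-((μ + δ) * t)))
        Filter.atTop (nhds 0) := Real.tendsto_exp_atBot.comp h1
    have := h2.const_mul |c|
    simpa using this
  have hev : ∀ᶠ t in Filter.atTop, S t - Shat t ≤ b t :=
    Filter.eventually_atTop.2 ⟨0, fun t ht => hub t ht⟩
  by_cases hcob : Filter.IsCoboundedUnder (· ≤ ·) Filter.atTop (fun t => S t - Shat t)
  · calc Filter.limsup (fun t => S t - Shat t) Filter.atTop
        ≤ Filter.limsup b Filter.atTop :=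
          Filter.limsup_le_limsup hev hcob hbtend.isBoundedUnder_le
      _ = 0 := hbtend.limsup_eq
  · rw [Filter.limsup_eq, csInf_of_not_bddBelow, Real.sInf_empty]
    intro hbdd
    obtain ⟨x, hx⟩ := hbdd
    exact hcob ⟨x, fun a ha => hx (Filter.eventually_map.1 ha)⟩
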